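/- As an identity of formal power series in q, 40q²P(q³)⁸X(−q³)²Φ(−q⁹)⁶ − 32q²P(q³)⁷X(−q³)Φ(−q⁹)⁷Ψ(q⁹) + 10q²P(q³)⁶Φ(−q⁹)⁸Ψ(q⁹)² = 2·3²·q²·(q⁶;q⁶)_∞⁶ (q⁹;q⁹)_∞²⁶ / ((q³;q³)_∞⁶ (q¹⁸;q¹⁸)_∞¹⁰). -/

import Mathlib

open PowerSeries

/-- The infinite product `(q^j; q^k)_∞ = ∏_{n ≥ 0} (1 - q^(j + k*n))` as a formal power
series over `ℤ`: for `j ≥ 1` its `n`-th coefficient is the (stable) `n`-th coefficient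
of the partial products `∏_{m < n+1} (1 - q^(j + k*m))`. -/
noncomputable def qp (j k : ℕ) : PowerSeries ℤ :=
  PowerSeries.mk fun n =>
    PowerSeries.coeff n
      (∏ m ∈ Finset.range (n + 1), (1 - (PowerSeries.X : PowerSeries ℤ) ^ (j + k * m)))

/-- Substitution of `q^k` for `q` in a formal power series (for `k ≥ 1`). -/
noncomputable def substQ (k : ℕ) (f : PowerSeries ℤ) : PowerSeries ℤ :=
  PowerSeries.mk fun n => if k ∣ n then PowerSeries.coeff (n / k) f else 0

/-- `Φ(-q) = (q;q)_∞² / (q²;q²)_∞`. -/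
noncomputable def Phi : PowerSeries ℤ := qp 1 1 ^ 2 * Ring.inverse (qp 2 2)

/-- `Ψ(q) = (q²;q²)_∞ / (q;q²)_∞`. -/
noncomputable def Psi : PowerSeries ℤ := qp 2 2 * Ring.inverse (qp 1 2)

/-- `P(q) = (q²;q⁶)_∞ (q⁴;q⁶)_∞ (q³;q³)_∞² / (q;q)_∞`. -/
noncomputable def Pq : PowerSeries ℤ := qp 2 6 * qp 4 6 * qp 3 3 ^ 2 * Ring.inverse (qp 1 1)

/-- `X(-q) = (q;q)_∞ (q⁶;q⁶)_∞² / ((q²;q²)_∞ (q³;q³)_∞)`. -/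
noncomputable def Xq : PowerSeries ℤ := qp 1 1 * qp 6 6 ^ 2 * Ring.inverse (qp 2 2 * qp 3 3)

/-- `Φ(-q³)` -/ noncomputable def Phi3 : PowerSeries ℤ := substQ 3 Phi
/-- `Φ(-q⁹)` -/ noncomputable def Phi9 : PowerSeries ℤ := substQ 9 Phi
/-- `Ψ(q³)` -/ noncomputable def Psi3 : PowerSeries ℤ := substQ 3 Psi
/-- `Ψ(q⁹)` -/ noncomputable def Psi9 : PowerSeries ℤ := substQ 9 Psi
/-- `P(q³)` -/ noncomputable def P3 : PowerSeries ℤ := substQ 3 Pq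
/-- `X(-q³)` -/ noncomputable def X3 : PowerSeries ℤ := substQ 3 Xq


open PowerSeries Finset

/-- Partial products. -/
noncomputable def pp (j k N : ℕ) : PowerSeries ℤ :=
  ∏ m ∈ Finset.range N, (1 - (PowerSeries.X : PowerSeries ℤ) ^ (j + k * m))

lemma pp_succ (j k N : ℕ) :
    pp j k (N + 1) = pp j k N * (1 - (PowerSeries.X : PowerSeries ℤ) ^ (j + k * N)) :=
  Finset.prod_range_succ _ _

lemma coeff_pp_stable {j k : ℕ} (hj : 1 ≤ j) (hk : 1 ≤ k) (n : ℕ) :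
    ∀ N, n < N → PowerSeries.coeff n (pp j k N) = PowerSeries.coeff n (pp j k (n + 1)) := by
  intro N
  induction N with
  | zero => omega
  | succ N ih =>
    intro hN
    rcases Nat.lt_or_ge n N with h | h
    · have hNk : N ≤ k * N := Nat.le_mul_of_pos_left N (by omega)
      rw [pp_succ, mul_sub, mul_one, map_sub, PowerSeries.coeff_mul_X_pow',
        if_neg (by omega), sub_zero, ih h]
    · have : n = N := by omega
      subst this; rfl

lemma coeff_qp {j k : ℕ} (hj : 1 ≤ j) (hk : 1 ≤ k) (n N : ℕ) (hN : n < N) :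
    PowerSeries.coeff n (qp j k) = PowerSeries.coeff n (pp j k N) := by
  rw [qp, coeff_mk, coeff_pp_stable hj hk n N hN]; rfl

lemma coeff_mul_congr {f f' g g' : PowerSeries ℤ} {n : ℕ}
    (hf : ∀ i ≤ n, coeff i f = coeff i f')
    (hg : ∀ i ≤ n, coeff i g = coeff i g') :
    ∀ i ≤ n, coeff i (f * g) = coeff i (f' * g') := by
  intro i hi
  rw [coeff_mul, coeff_mul]
  refine Finset.sum_congr rfl fun p hp => ?_
  rw [Finset.HasAntidiagonal.mem_antidiagonal] at hp
  rw [hf p.1 (by omega), hg p.2 (by omega)]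

lemma pp_two_split (j k M : ℕ) :
    pp j k (2 * M) = pp j (2 * k) M * pp (j + k) (2 * k) M := by
  induction M with
  | zero => simp [pp]
  | succ M ih =>
    have h2 : 2 * (M + 1) = (2 * M) + 1 + 1 := by ring
    rw [h2, pp_succ, pp_succ, pp_succ, pp_succ, ih,
      show j + k * (2 * M + 1) = (j + k) + 2 * k * M by ring,
      show j + k * (2 * M) = j + 2 * k * M by ring]
    ring

lemma pp_three_split (j k M : ℕ) :
    pp j k (3 * M) = pp j (3 * k) M * pp (j + k) (3 * k) M * pp (j + 2 * k) (3 * k) M := by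
  induction M with
  | zero => simp [pp]
  | succ M ih =>
    have h3 : 3 * (M + 1) = (3 * M) + 1 + 1 + 1 := by ring
    rw [h3, pp_succ, pp_succ, pp_succ, pp_succ, pp_succ, pp_succ, ih,
      show j + k * (3 * M + 1 + 1) = (j + 2 * k) + 3 * k * M by ring,
      show j + k * (3 * M + 1) = (j + k) + 3 * k * M by ring,
      show j + k * (3 * M) = j + 3 * k * M by ring]
    ring

lemma qp_two_split {j k : ℕ} (hj : 1 ≤ j) (hk : 1 ≤ k) :
    qp j k = qp j (2 * k) * qp (j + k) (2 * k) := by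
  ext n
  rw [coeff_qp hj hk n (2 * (n + 1)) (by omega), pp_two_split]
  exact (coeff_mul_congr
    (fun i hi => coeff_qp hj (by omega) i (n + 1) (by omega))
    (fun i hi => coeff_qp (by omega) (by omega) i (n + 1) (by omega)) n le_rfl).symm

lemma qp_three_split {j k : ℕ} (hj : 1 ≤ j) (hk : 1 ≤ k) :
    qp j k = qp j (3 * k) * qp (j + k) (3 * k) * qp (j + 2 * k) (3 * k) := by
  ext n
  rw [coeff_qp hj hk n (3 * (n + 1)) (by omega), pp_three_split]
  exact (coeff_mul_congr
    (coeff_mul_congr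
      (fun i hi => coeff_qp hj (by omega) i (n + 1) (by omega))
      (fun i hi => coeff_qp (by omega) (by omega) i (n + 1) (by omega)))
    (fun i hi => coeff_qp (by omega) (by omega) i (n + 1) (by omega)) n le_rfl).symm

lemma coeff_substQ (k : ℕ) (f : PowerSeries ℤ) (n : ℕ) :
    coeff n (substQ k f) = if k ∣ n then coeff (n / k) f else 0 := by
  rw [substQ, coeff_mk]

lemma substQ_one {k : ℕ} (hk : 1 ≤ k) : substQ k (1 : PowerSeries ℤ) = 1 := by
  ext n
  rw [coeff_substQ]
  simp only [coeff_one]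
  by_cases h : k ∣ n
  · rw [if_pos h]
    have heq : n / k = 0 ↔ n = 0 := by
      constructor
      · intro h0
        obtain ⟨m, rfl⟩ := h
        rw [Nat.mul_div_cancel_left m (by omega)] at h0
        rw [h0, Nat.mul_zero]
      · rintro rfl
        exact Nat.zero_div k
    rw [if_congr heq rfl rfl]
  · rw [if_neg h, eq_comm, if_neg]
    rintro rfl
    exact h (dvd_zero k)

lemma substQ_mul {k : ℕ} (hk : 1 ≤ k) (f g : PowerSeries ℤ) :
    substQ k (f * g) = substQ k f * substQ k g := by
  ext n
  rw [coeff_substQ]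
  conv_rhs => rw [coeff_mul]
  simp only [coeff_substQ]
  by_cases h : k ∣ n
  · obtain ⟨m, rfl⟩ := h
    rw [if_pos (Dvd.intro m rfl), coeff_mul, Nat.mul_div_cancel_left m (by omega)]
    have hinj : Set.InjOn (fun p : ℕ × ℕ => (k * p.1, k * p.2)) (antidiagonal m) := by
      intro p _ q _ hpq
      have h1 : k * p.1 = k * q.1 := congrArg Prod.fst hpq
      have h2 : k * p.2 = k * q.2 := congrArg Prod.snd hpq
      exact Prod.ext (Nat.eq_of_mul_eq_mul_left (by omega) h1)
        (Nat.eq_of_mul_eq_mul_left (by omega) h2)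
    have hsub : (antidiagonal m).image (fun p : ℕ × ℕ => (k * p.1, k * p.2)) ⊆
        antidiagonal (k * m) := by
      intro p hp
      obtain ⟨q, hq, rfl⟩ := Finset.mem_image.mp hp
      rw [Finset.HasAntidiagonal.mem_antidiagonal] at hq ⊢
      rw [← Nat.mul_add, hq]
    have hzero : ∀ p ∈ antidiagonal (k * m),
        p ∉ (antidiagonal m).image (fun p : ℕ × ℕ => (k * p.1, k * p.2)) →
        (if k ∣ p.1 then coeff (p.1 / k) f else 0) *
          (if k ∣ p.2 then coeff (p.2 / k) g else 0) = 0 := by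
      intro p hp hnp
      by_cases h1 : k ∣ p.1
      · by_cases h2 : k ∣ p.2
        · exfalso
          obtain ⟨a, ha⟩ := h1
          obtain ⟨b, hb⟩ := h2
          apply hnp
          rw [Finset.HasAntidiagonal.mem_antidiagonal] at hp
          refine Finset.mem_image.mpr ⟨(a, b), ?_, by simp [← ha, ← hb]⟩
          rw [Finset.HasAntidiagonal.mem_antidiagonal]
          have : k * (a + b) = k * m := by rw [Nat.mul_add, ← ha, ← hb, hp]
          exact Nat.eq_of_mul_eq_mul_left (by omega) this
        · rw [if_neg h2, mul_zero]
      · rw [if_neg h1, zero_mul]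
    rw [← Finset.sum_subset hsub hzero, Finset.sum_image hinj]
    refine Finset.sum_congr rfl fun p _ => ?_
    rw [if_pos (Dvd.intro p.1 rfl), if_pos (Dvd.intro p.2 rfl),
      Nat.mul_div_cancel_left _ (show 0 < k by omega),
      Nat.mul_div_cancel_left _ (show 0 < k by omega)]
  · rw [if_neg h]
    refine (Finset.sum_eq_zero fun p hp => ?_).symm
    rw [Finset.HasAntidiagonal.mem_antidiagonal] at hp
    by_cases h1 : k ∣ p.1
    · by_cases h2 : k ∣ p.2
      · exact absurd (hp ▸ Nat.dvd_add h1 h2) h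
      · rw [if_neg h2, mul_zero]
    · rw [if_neg h1, zero_mul]

lemma substQ_one_sub_Xpow {k : ℕ} (hk : 1 ≤ k) (e : ℕ) :
    substQ k (1 - (PowerSeries.X : PowerSeries ℤ) ^ e) =
      1 - (PowerSeries.X : PowerSeries ℤ) ^ (k * e) := by
  ext n
  rw [coeff_substQ, map_sub, map_sub, coeff_one, coeff_one, coeff_X_pow, coeff_X_pow]
  by_cases h : k ∣ n
  · obtain ⟨m, rfl⟩ := h
    rw [if_pos (Dvd.intro m rfl), Nat.mul_div_cancel_left m (by omega)]
    have h1 : (k * m = 0) ↔ (m = 0) := by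
      constructor
      · intro h0; rcases Nat.mul_eq_zero.mp h0 with h' | h' <;> omega
      · intro h0; rw [h0, Nat.mul_zero]
    have h2 : (k * m = k * e) ↔ (m = e) := by
      constructor
      · intro h0; exact Nat.eq_of_mul_eq_mul_left (by omega) h0
      · intro h0; rw [h0]
    rw [if_congr h1 rfl rfl, if_congr h2 rfl rfl]
  · have hn0 : n ≠ 0 := by rintro rfl; exact h (dvd_zero k)
    have hne : n ≠ k * e := by rintro rfl; exact h (Dvd.intro e rfl)
    rw [if_neg h, if_neg hn0, if_neg hne, sub_zero]

lemma substQ_pp {s : ℕ} (hs : 1 ≤ s) (j k N : ℕ) :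
    substQ s (pp j k N) = pp (s * j) (s * k) N := by
  induction N with
  | zero =>
    rw [show pp j k 0 = 1 from Finset.prod_range_zero _,
      show pp (s * j) (s * k) 0 = 1 from Finset.prod_range_zero _, substQ_one hs]
  | succ N ih =>
    rw [pp_succ, substQ_mul hs, ih, substQ_one_sub_Xpow hs, pp_succ,
      show s * (j + k * N) = s * j + s * k * N by ring]

lemma substQ_qp {s j k : ℕ} (hs : 1 ≤ s) (hj : 1 ≤ j) (hk : 1 ≤ k) :
    substQ s (qp j k) = qp (s * j) (s * k) := by
  ext n
  rw [coeff_substQ, coeff_qp (show 1 ≤ s * j by nlinarith) (show 1 ≤ s * k by nlinarith)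
    n (n + 1) (by omega), ← substQ_pp hs, coeff_substQ]
  by_cases h : s ∣ n
  · rw [if_pos h, if_pos h,
      coeff_qp hj hk (n / s) (n + 1) (Nat.lt_succ_of_le (Nat.div_le_self n s))]
  · rw [if_neg h, if_neg h]

lemma coeff_zero_qp {j k : ℕ} (hj : 1 ≤ j) : coeff 0 (qp j k) = 1 := by
  rw [qp, coeff_mk, Finset.prod_range_one, map_sub, coeff_one, coeff_X_pow,
    if_pos rfl, if_neg (by omega), sub_zero]

lemma isUnit_qp {j k : ℕ} (hj : 1 ≤ j) : IsUnit (qp j k) := by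
  rw [PowerSeries.isUnit_iff_constantCoeff]
  have h : constantCoeff (qp j k) = 1 := by
    rw [← coeff_zero_eq_constantCoeff_apply, coeff_zero_qp hj]
  rw [h]
  exact isUnit_one

lemma hB : qp 6 6 = qp 6 18 * qp 12 18 * qp 18 18 := by
  simpa using qp_three_split (j := 6) (k := 6) (by norm_num) (by norm_num)

lemma hC : qp 9 9 = qp 9 18 * qp 18 18 := by
  simpa using qp_two_split (j := 9) (k := 9) (by norm_num) (by norm_num)

lemma e31 : substQ 3 (qp 1 1) = qp 3 3 := by
  simpa using substQ_qp (s := 3) (j := 1) (k := 1) (by norm_num) (by norm_num) (by norm_num)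
lemma e32 : substQ 3 (qp 2 2) = qp 6 6 := by
  simpa using substQ_qp (s := 3) (j := 2) (k := 2) (by norm_num) (by norm_num) (by norm_num)
lemma e33 : substQ 3 (qp 3 3) = qp 9 9 := by
  simpa using substQ_qp (s := 3) (j := 3) (k := 3) (by norm_num) (by norm_num) (by norm_num)
lemma e326 : substQ 3 (qp 2 6) = qp 6 18 := by
  simpa using substQ_qp (s := 3) (j := 2) (k := 6) (by norm_num) (by norm_num) (by norm_num)
lemma e346 : substQ 3 (qp 4 6) = qp 12 18 := by
  simpa using substQ_qp (s := 3) (j := 4) (k := 6) (by norm_num) (by norm_num) (by norm_num)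
lemma e91 : substQ 9 (qp 1 1) = qp 9 9 := by
  simpa using substQ_qp (s := 9) (j := 1) (k := 1) (by norm_num) (by norm_num) (by norm_num)
lemma e92 : substQ 9 (qp 2 2) = qp 18 18 := by
  simpa using substQ_qp (s := 9) (j := 2) (k := 2) (by norm_num) (by norm_num) (by norm_num)
lemma e912 : substQ 9 (qp 1 2) = qp 9 18 := by
  simpa using substQ_qp (s := 9) (j := 1) (k := 2) (by norm_num) (by norm_num) (by norm_num)

lemma hP3A : P3 * qp 3 3 = qp 6 18 * qp 12 18 * qp 9 9 ^ 2 := by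
  have hu : Ring.inverse (qp 1 1) * qp 1 1 = 1 :=
    Ring.inverse_mul_cancel _ (isUnit_qp (k := 1) le_rfl)
  calc P3 * qp 3 3 = substQ 3 (Pq * qp 1 1) := by
        rw [P3, ← e31, ← substQ_mul (by norm_num)]
    _ = substQ 3 (qp 2 6 * (qp 4 6 * (qp 3 3 * qp 3 3))) := by
        rw [show Pq * qp 1 1 = qp 2 6 * (qp 4 6 * (qp 3 3 * qp 3 3)) *
            (Ring.inverse (qp 1 1) * qp 1 1) from by rw [Pq]; ring, hu, mul_one]
    _ = qp 6 18 * (qp 12 18 * (qp 9 9 * qp 9 9)) := by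
        rw [substQ_mul (by norm_num), substQ_mul (by norm_num), substQ_mul (by norm_num),
          e326, e346, e33]
    _ = qp 6 18 * qp 12 18 * qp 9 9 ^ 2 := by ring

lemma hX3BC : X3 * (qp 6 6 * qp 9 9) = qp 3 3 * qp 18 18 ^ 2 := by
  have hu : Ring.inverse (qp 2 2 * qp 3 3) * (qp 2 2 * qp 3 3) = 1 :=
    Ring.inverse_mul_cancel _ ((isUnit_qp (j := 2) (k := 2) (by norm_num)).mul (isUnit_qp (j := 3) (k := 3) (by norm_num)))
  calc X3 * (qp 6 6 * qp 9 9) = substQ 3 (Xq * (qp 2 2 * qp 3 3)) := by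
        rw [X3, ← e32, ← e33, ← substQ_mul (by norm_num), ← substQ_mul (by norm_num)]
    _ = substQ 3 (qp 1 1 * (qp 6 6 * qp 6 6)) := by
        rw [show Xq * (qp 2 2 * qp 3 3) = qp 1 1 * (qp 6 6 * qp 6 6) *
            (Ring.inverse (qp 2 2 * qp 3 3) * (qp 2 2 * qp 3 3)) from by rw [Xq]; ring,
          hu, mul_one]
    _ = qp 3 3 * (qp 18 18 * qp 18 18) := by
        rw [substQ_mul (by norm_num), substQ_mul (by norm_num), e31,
          show substQ 3 (qp 6 6) = qp 18 18 from by
            simpa using substQ_qp (s := 3) (j := 6) (k := 6) (by norm_num) (by norm_num)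
              (by norm_num)]
    _ = qp 3 3 * qp 18 18 ^ 2 := by ring

lemma hPhi9D : Phi9 * qp 18 18 = qp 9 9 ^ 2 := by
  have hu : Ring.inverse (qp 2 2) * qp 2 2 = 1 :=
    Ring.inverse_mul_cancel _ (isUnit_qp (j := 2) (k := 2) (by norm_num))
  calc Phi9 * qp 18 18 = substQ 9 (Phi * qp 2 2) := by
        rw [Phi9, ← e92, ← substQ_mul (by norm_num)]
    _ = substQ 9 (qp 1 1 * qp 1 1) := by
        rw [show Phi * qp 2 2 = qp 1 1 * qp 1 1 * (Ring.inverse (qp 2 2) * qp 2 2) from by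
          rw [Phi]; ring, hu, mul_one]
    _ = qp 9 9 * qp 9 9 := by rw [substQ_mul (by norm_num), e91]
    _ = qp 9 9 ^ 2 := by ring

lemma hPsi9G : Psi9 * qp 9 18 = qp 18 18 := by
  have hu : Ring.inverse (qp 1 2) * qp 1 2 = 1 :=
    Ring.inverse_mul_cancel _ (isUnit_qp (j := 1) (k := 2) (by norm_num))
  calc Psi9 * qp 9 18 = substQ 9 (Psi * qp 1 2) := by
        rw [Psi9, ← e912, ← substQ_mul (by norm_num)]
    _ = substQ 9 (qp 2 2) := by
        rw [show Psi * qp 1 2 = qp 2 2 * (Ring.inverse (qp 1 2) * qp 1 2) from by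
          rw [Psi]; ring, hu, mul_one]
    _ = qp 18 18 := e92

theorem A_eval :
    40 * (PowerSeries.X : PowerSeries ℤ) ^ 2 * P3 ^ 8 * X3 ^ 2 * Phi9 ^ 6 - 32 * (PowerSeries.X : PowerSeries ℤ) ^ 2 * P3 ^ 7 * X3 * Phi9 ^ 7 * Psi9 + 10 * (PowerSeries.X : PowerSeries ℤ) ^ 2 * P3 ^ 6 * Phi9 ^ 8 * Psi9 ^ 2 = 2 * 3 ^ 2 * (PowerSeries.X : PowerSeries ℤ) ^ 2 * (qp 6 6 ^ 6 * qp 9 9 ^ 26 * Ring.inverse (qp 3 3 ^ 6 * qp 18 18 ^ 10)) := by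
  have uA : IsUnit (qp 3 3) := isUnit_qp (by norm_num)
  have uB : IsUnit (qp 6 6) := isUnit_qp (by norm_num)
  have uC : IsUnit (qp 9 9) := isUnit_qp (by norm_num)
  have uD : IsUnit (qp 18 18) := isUnit_qp (by norm_num)
  have uG : IsUnit (qp 9 18) := isUnit_qp (by norm_num)
  have hW : (qp 3 3 ^ 8 * qp 6 6 ^ 2 * qp 9 9 ^ 2 * qp 18 18 ^ 10 * qp 9 18 ^ 2 :
      PowerSeries ℤ) ≠ 0 :=
    (((((uA.pow 8).mul (uB.pow 2)).mul (uC.pow 2)).mul (uD.pow 10)).mul (uG.pow 2)).ne_zero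
  have hU : Ring.inverse (qp 3 3 ^ 6 * qp 18 18 ^ 10) * (qp 3 3 ^ 6 * qp 18 18 ^ 10)
      = (1 : PowerSeries ℤ) :=
    Ring.inverse_mul_cancel _ ((uA.pow 6).mul (uD.pow 10))
  apply mul_right_cancel₀ hW
  have hL : (40 * (PowerSeries.X : PowerSeries ℤ) ^ 2 * P3 ^ 8 * X3 ^ 2 * Phi9 ^ 6 -
        32 * (PowerSeries.X : PowerSeries ℤ) ^ 2 * P3 ^ 7 * X3 * Phi9 ^ 7 * Psi9 +
        10 * (PowerSeries.X : PowerSeries ℤ) ^ 2 * P3 ^ 6 * Phi9 ^ 8 * Psi9 ^ 2) *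
        (qp 3 3 ^ 8 * qp 6 6 ^ 2 * qp 9 9 ^ 2 * qp 18 18 ^ 10 * qp 9 18 ^ 2) =
      2 * 3 ^ 2 * (PowerSeries.X : PowerSeries ℤ) ^ 2 * qp 3 3 ^ 2 * qp 6 18 ^ 8 *
        qp 12 18 ^ 8 * qp 9 18 ^ 30 * qp 18 18 ^ 36 := by
    calc _ = 40 * (PowerSeries.X : PowerSeries ℤ) ^ 2 * (P3 * qp 3 3) ^ 8 *
            (X3 * (qp 6 6 * qp 9 9)) ^ 2 * (Phi9 * qp 18 18) ^ 6 *
            (qp 18 18 ^ 4 * qp 9 18 ^ 2)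
          - 32 * (PowerSeries.X : PowerSeries ℤ) ^ 2 * (P3 * qp 3 3) ^ 7 *
            (X3 * (qp 6 6 * qp 9 9)) * (Phi9 * qp 18 18) ^ 7 * (Psi9 * qp 9 18) *
            (qp 3 3 * qp 6 6 * qp 9 9 * qp 18 18 ^ 3 * qp 9 18)
          + 10 * (PowerSeries.X : PowerSeries ℤ) ^ 2 * (P3 * qp 3 3) ^ 6 *
            (Phi9 * qp 18 18) ^ 8 * (Psi9 * qp 9 18) ^ 2 *
            (qp 3 3 ^ 2 * qp 6 6 ^ 2 * qp 9 9 ^ 2 * qp 18 18 ^ 2) := by ring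
      _ = 40 * (PowerSeries.X : PowerSeries ℤ) ^ 2 * (qp 6 18 * qp 12 18 * qp 9 9 ^ 2) ^ 8 *
            (qp 3 3 * qp 18 18 ^ 2) ^ 2 * (qp 9 9 ^ 2) ^ 6 *
            (qp 18 18 ^ 4 * qp 9 18 ^ 2)
          - 32 * (PowerSeries.X : PowerSeries ℤ) ^ 2 * (qp 6 18 * qp 12 18 * qp 9 9 ^ 2) ^ 7 *
            (qp 3 3 * qp 18 18 ^ 2) * (qp 9 9 ^ 2) ^ 7 * qp 18 18 *
            (qp 3 3 * qp 6 6 * qp 9 9 * qp 18 18 ^ 3 * qp 9 18)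
          + 10 * (PowerSeries.X : PowerSeries ℤ) ^ 2 * (qp 6 18 * qp 12 18 * qp 9 9 ^ 2) ^ 6 *
            (qp 9 9 ^ 2) ^ 8 * qp 18 18 ^ 2 *
            (qp 3 3 ^ 2 * qp 6 6 ^ 2 * qp 9 9 ^ 2 * qp 18 18 ^ 2) := by
          rw [hP3A, hX3BC, hPhi9D, hPsi9G]
      _ = _ := by rw [hB, hC]; ring
  have hR : 2 * 3 ^ 2 * (PowerSeries.X : PowerSeries ℤ) ^ 2 *
        (qp 6 6 ^ 6 * qp 9 9 ^ 26 * Ring.inverse (qp 3 3 ^ 6 * qp 18 18 ^ 10)) *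
        (qp 3 3 ^ 8 * qp 6 6 ^ 2 * qp 9 9 ^ 2 * qp 18 18 ^ 10 * qp 9 18 ^ 2) =
      2 * 3 ^ 2 * (PowerSeries.X : PowerSeries ℤ) ^ 2 * qp 3 3 ^ 2 * qp 6 18 ^ 8 *
        qp 12 18 ^ 8 * qp 9 18 ^ 30 * qp 18 18 ^ 36 := by
    calc _ = 2 * 3 ^ 2 * (PowerSeries.X : PowerSeries ℤ) ^ 2 * (qp 6 6 ^ 6 * qp 9 9 ^ 26) *
            (Ring.inverse (qp 3 3 ^ 6 * qp 18 18 ^ 10) * (qp 3 3 ^ 6 * qp 18 18 ^ 10)) *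
            (qp 3 3 ^ 2 * qp 6 6 ^ 2 * qp 9 9 ^ 2 * qp 9 18 ^ 2) := by ring
      _ = _ := by rw [hU, hB, hC]; ring
  exact hL.trans hR.symm
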